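/- Monomial identity: ∏_{ν ∈ Z^0_{s,s+n−1}} x_{ι(ν)}^{s+n−[s+n−1]} = ∏_{k=1}^{s} ∏_{j=1}^{n} x_{(k−1)n+j}^{(s+1−k)·binom(s+n−j, s)}, where for J = {j_1 < … < j_{s+n−1}}, x_J^{s+n−[s+n−1]} = x_{j_1}^{s+n−1} x_{j_2}^{s+n−2} ⋯ x_{j_{s+n−1}}. -/

import Mathlib

open Finset

/-- The minor of `A` on the rows `I` and columns `J` (listed increasingly);
junk value `0` if `I` and `J` have different sizes. -/
def minor {R : Type*} [CommRing R] {N M : ℕ} (A : Matrix (Fin N) (Fin M) R)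
    (I : Finset (Fin N)) (J : Finset (Fin M)) : R :=
  if h : J.card = I.card then
    (A.submatrix (I.orderEmbOfFin rfl) (J.orderEmbOfFin h)).det
  else 0

/-- `ι(μ) = ⊔_i {(i−1)n+1, …, (i−1)n+μ_i} ⊆ [sn]` (here `0`-based). -/
def iotaSet (s n : ℕ) (μ : Fin s → ℕ) : Finset (Fin (s * n)) :=
  Finset.univ.filter fun x =>
    (x : ℕ) % n < if h : (x : ℕ) / n < s then μ ⟨(x : ℕ) / n, h⟩ else 0

/-- `φ^{(k)}(μ) = {(i−1)n + μ_i + 1 : i ≠ k} ⊆ [sn]` (here `0`-based). -/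
def phiSet (s n : ℕ) (k : Fin s) (μ : Fin s → ℕ) : Finset (Fin (s * n)) :=
  Finset.univ.filter fun x =>
    (x : ℕ) / n ≠ (k : ℕ) ∧
      ((x : ℕ) % n) = (if h : (x : ℕ) / n < s then μ ⟨(x : ℕ) / n, h⟩ else n)

/-- `ε(J,K)`: the sign of the permutation sorting the concatenation of `J` and
`K`, and `0` if `J ∩ K ≠ ∅`. -/
def eps {α : Type*} [LinearOrder α] (J K : Finset α) : ℤ :=
  if Disjoint J K then (-1) ^ ((J ×ˢ K).filter fun p => p.2 < p.1).card else 0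

/-- The sign `(−1)^{|I| − n(n+1)/2}` (written with the same parity as
`|I| + n(n+1)/2`, where `|I|` is the sum of the (1-based) elements of `I`). -/
def vSign {N : ℕ} (n : ℕ) (I : Finset (Fin N)) : ℤ :=
  (-1) ^ ((∑ i ∈ I, ((i : ℕ) + 1)) + n * (n + 1) / 2)

/-- The inner product `⟨V_J(A), V̄_K(A)⟩ = ∑_{I ∈ ([s+n−1] choose n)}
(det A^I_J) · (−1)^{|I|−n(n+1)/2} (det A^{Ī}_K)`. -/
noncomputable def innerVV {R : Type*} [CommRing R] {s n : ℕ}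
    (A : Matrix (Fin (s + n - 1)) (Fin (s * n)) R)
    (J K : Finset (Fin (s * n))) : R :=
  ∑ I : {I : Finset (Fin (s + n - 1)) // I.card = n},
    minor A I.1 J * (((vSign n I.1 : ℤ) : R) * minor A (I.1)ᶜ K)

/-- The set of "star positions" of `μ ∈ Z_{s,n}` in the stars-and-bars word:
this is the order isomorphism `Z_{s,n} ≅ ([s+n−1] choose n)` matching the
lexicographic orderings used for the rows and columns of `M(A)`. -/
def starPos (s n : ℕ) (μ : Fin s → ℕ) : Finset (Fin (s + n - 1)) :=
  Finset.univ.filter fun p => ∃ i : Fin s,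
    (∑ l ∈ Finset.univ.filter (· < i), μ l) + (i : ℕ) ≤ (p : ℕ) ∧
      (p : ℕ) < (∑ l ∈ Finset.univ.filter (· ≤ i), μ l) + (i : ℕ)

/-- `Z_{s,n}`, the compositions of `n` into `s` nonnegative parts, as a type. -/
abbrev Comp (s n : ℕ) := {μ : Fin s → ℕ // μ ∈ Finset.Nat.antidiagonalTuple s n}

/-- The matrix `M(A) = (det A^I_{ι(μ)})_{I,μ}`, with rows indexed through the
order isomorphism `starPos` (i.e. rows and columns in lexicographic order). -/
noncomputable def Mmat {R : Type*} [CommRing R] (s n : ℕ)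
    (A : Matrix (Fin (s + n - 1)) (Fin (s * n)) R) :
    Matrix (Comp s n) (Comp s n) R :=
  Matrix.of fun ρ μ => minor A (starPos s n ρ.1) (iotaSet s n μ.1)

/-- The matrix `M̂(Φ,A) = ((−1)^{|I|−n(n+1)/2} det A^{Ī}_{Φ(μ)})_{I,μ}`, rows
indexed through `starPos` as in `Mmat`. -/
noncomputable def Mhat {R : Type*} [CommRing R] (s n : ℕ)
    (A : Matrix (Fin (s + n - 1)) (Fin (s * n)) R)
    (Φ : (Fin s → ℕ) → Finset (Fin (s * n))) :
    Matrix (Comp s n) (Comp s n) R :=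
  Matrix.of fun ρ μ =>
    ((vSign n (starPos s n ρ.1) : ℤ) : R) * minor A (starPos s n ρ.1)ᶜ (Φ μ.1)

/-- The exponent vector of the monomial `x_J^{s+n−I} = ∏_p x_{j_p}^{s+n−i_p}`
(with `I`, `J` listed increasingly; junk `0` if the sizes differ). -/
noncomputable def Dvec (s n : ℕ) (I : Finset (Fin (s + n - 1)))
    (J : Finset (Fin (s * n))) : Fin (s * n) →₀ ℕ :=
  if h : J.card = I.card then
    ∑ p : Fin I.card,
      Finsupp.single (J.orderEmbOfFin h p) ((s + n - 1) - (I.orderEmbOfFin rfl p : ℕ))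
  else 0

/-- `d` is lexicographically smaller than `D` for `x_1 ≫ x_2 ≫ ⋯`: at the first
index where they differ, `d` has the smaller exponent. -/
def lexLT {M : ℕ} (d D : Fin M →₀ ℕ) : Prop :=
  ∃ j : Fin M, (∀ i : Fin M, i < j → d i = D i) ∧ d j < D j

/-- The element `(k−1)n + j` of `[sn]` (0-based: `k·n + j`). -/
def finIdx {s n : ℕ} (k : Fin s) (j : Fin n) : Fin (s * n) :=
  ⟨(k : ℕ) * n + (j : ℕ), by
    have h1 : (k : ℕ) * n + (j : ℕ) < ((k : ℕ) + 1) * n := by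
      rw [Nat.succ_mul]; exact Nat.add_lt_add_left j.isLt _
    exact lt_of_lt_of_le h1 (Nat.mul_le_mul_right n k.isLt)⟩

/-- The exponent vector of `∏_{k=1}^s ∏_{j=1}^n x_{(k−1)n+j}^{(s+1−k)·C(s+n−j, s)}`. -/
noncomputable def Dstar (s n : ℕ) : Fin (s * n) →₀ ℕ :=
  ∑ k : Fin s, ∑ j : Fin n,
    Finsupp.single (finIdx k j) ((s - (k : ℕ)) * (s + n - 1 - (j : ℕ)).choose s)

def posComp (s m : ℕ) : Finset (Fin s → ℕ) :=
  (Finset.Nat.antidiagonalTuple s m).filter (fun ν => ∀ i, 0 < ν i)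

lemma mem_posComp {s m : ℕ} {ν : Fin s → ℕ} :
    ν ∈ posComp s m ↔ (∑ i, ν i = m ∧ ∀ i, 0 < ν i) := by
  simp [posComp, Finset.Nat.mem_antidiagonalTuple]

lemma posComp_succ_sum {M : Type*} [AddCommMonoid M] (s m : ℕ)
    (f : (Fin (s+1) → ℕ) → M) :
    ∑ ν ∈ posComp (s+1) m, f ν =
      ∑ a ∈ Finset.Icc 1 m, ∑ ν ∈ posComp s (m - a), f (Fin.cons a ν) := by
  rw [show (∑ a ∈ Finset.Icc 1 m, ∑ ν ∈ posComp s (m - a), f (Fin.cons a ν))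
      = ∑ p ∈ (Finset.Icc 1 m).sigma (fun a => posComp s (m - a)), f (Fin.cons p.1 p.2)
    from (Finset.sum_sigma (Finset.Icc 1 m) (fun a => posComp s (m-a))
      (fun p => f (Fin.cons p.1 p.2))).symm]
  refine Finset.sum_nbij' (fun ν => (⟨ν 0, Fin.tail ν⟩ : (_ : ℕ) × (Fin s → ℕ)))
    (fun p => Fin.cons p.1 p.2) ?_ ?_ ?_ ?_ ?_
  · rintro ν hν
    rw [mem_posComp] at hν
    obtain ⟨hsum, hpos⟩ := hν
    rw [Fin.sum_univ_succ] at hsum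
    simp only [Finset.mem_sigma, Finset.mem_Icc, mem_posComp]
    refine ⟨⟨hpos 0, le_of_le_of_eq (Nat.le_add_right _ _) hsum⟩, ?_, fun i => hpos i.succ⟩
    simp only [Fin.tail]
    omega
  · rintro ⟨a, ν⟩ hp
    simp only [Finset.mem_sigma, Finset.mem_Icc, mem_posComp] at hp
    obtain ⟨⟨ha1, ham⟩, hsum, hpos⟩ := hp
    rw [mem_posComp, Fin.sum_univ_succ]
    constructor
    · simp only [Fin.cons_zero, Fin.cons_succ]; omega
    · intro i
      refine Fin.cases ?_ ?_ i
      · exact ha1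
      · intro i; simpa using hpos i
  · intro ν _; exact Fin.cons_self_tail ν
  · rintro ⟨a, ν⟩ _; simp
  · intro ν _; simp

lemma hockey (N t : ℕ) : ∑ b ∈ Finset.range N, b.choose t = N.choose (t+1) := by
  induction N with
  | zero => simp
  | succ N ih => rw [Finset.sum_range_succ, ih, Nat.choose_succ_succ' (N) (t)]; ring

lemma posComp_zero_eq (s : ℕ) : posComp (s+1) 0 = ∅ := by
  ext ν
  simp only [mem_posComp, Finset.notMem_empty, iff_false, not_and]
  intro hsum
  intro hpos
  have := hpos 0
  have h2 : ν 0 ≤ ∑ i, ν i := Finset.single_le_sum (fun i _ => Nat.zero_le _) (Finset.mem_univ 0)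
  omega

lemma sum_Icc_rev {M : Type*} [AddCommMonoid M] (m : ℕ) (f : ℕ → M) :
    ∑ a ∈ Finset.Icc 1 m, f (m - a) = ∑ b ∈ Finset.range m, f b := by
  refine Finset.sum_nbij' (fun a => m - a) (fun b => m - b) ?_ ?_ ?_ ?_ (fun a _ => rfl) <;>
    simp only [Finset.mem_Icc, Finset.mem_range] <;> intros <;> omega

lemma card_posComp (s : ℕ) : ∀ m, 0 < m → (posComp (s+1) m).card = (m-1).choose s := by
  induction s with
  | zero =>
    intro m hm
    have : posComp 1 m = {fun _ => m} := by
      ext ν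
      simp only [mem_posComp, Fin.sum_univ_one, Finset.mem_singleton]
      constructor
      · rintro ⟨h1, _⟩; funext i; rw [Fin.eq_zero i, h1]
      · rintro rfl; exact ⟨rfl, fun i => hm⟩
    rw [this]; simp
  | succ s ih =>
    rintro m hm
    obtain ⟨m', rfl⟩ : ∃ m', m = m' + 1 := ⟨m - 1, by omega⟩
    have hsum := posComp_succ_sum (s+1) (m'+1) (fun _ => (1 : ℕ))
    simp only [Finset.sum_const, smul_eq_mul, mul_one] at hsum
    rw [hsum, Finset.sum_Icc_succ_top (by omega : 1 ≤ m' + 1)]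
    have hterm : ∀ a ∈ Finset.Icc 1 m', (posComp (s+1) (m' + 1 - a)).card
        = (m' - a).choose s := by
      intro a ha
      simp only [Finset.mem_Icc] at ha
      rw [ih (m' + 1 - a) (by omega)]
      congr 1
      omega
    rw [Finset.sum_congr rfl hterm, Nat.sub_self, posComp_zero_eq]
    rw [sum_Icc_rev m' (fun b => b.choose s), hockey]
    simp


lemma card_posComp_gt (s j m : ℕ) :
    ((posComp (s+1) m).filter fun ν => j < ν 0).card = (posComp (s+1) (m - j)).card := by
  refine Finset.card_nbij' (fun ν => Fin.cons (ν 0 - j) (Fin.tail ν))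
    (fun μ => Fin.cons (μ 0 + j) (Fin.tail μ)) ?_ ?_ ?_ ?_
  · rintro ν hν
    simp only [Finset.mem_coe, Finset.mem_filter, mem_posComp] at hν ⊢
    obtain ⟨⟨hsum, hpos⟩, hj⟩ := hν
    rw [Fin.sum_univ_succ] at hsum
    rw [Fin.sum_univ_succ]
    simp only [Fin.cons_zero, Fin.cons_succ]
    refine ⟨by simp only [Fin.tail]; omega, ?_⟩
    intro i
    refine Fin.cases (by simp only [Fin.cons_zero]; omega) (fun i => ?_) i
    simp only [Fin.cons_succ]; exact hpos i.succ
  · rintro μ hμ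
    simp only [Finset.mem_coe, Finset.mem_filter, mem_posComp] at hμ ⊢
    obtain ⟨hsum, hpos⟩ := hμ
    rw [Fin.sum_univ_succ] at hsum
    rw [Fin.sum_univ_succ]
    simp only [Fin.cons_zero, Fin.cons_succ]
    have h0 := hpos 0
    have htail : ∀ i : Fin s, 0 < Fin.tail μ i := fun i => hpos i.succ
    have hjm : j ≤ m := by
      by_contra h
      have : m - j = 0 := by omega
      omega
    refine ⟨⟨by simp only [Fin.tail]; omega, ?_⟩, by omega⟩
    intro i
    refine Fin.cases (by simp only [Fin.cons_zero]; omega) (fun i => ?_) i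
    simp only [Fin.cons_succ]; exact htail i
  · rintro ν hν
    simp only [Finset.mem_coe, Finset.mem_filter, mem_posComp] at hν
    obtain ⟨⟨hsum, hpos⟩, hj⟩ := hν
    funext i
    refine Fin.cases ?_ (fun i => ?_) i
    · simp only [Fin.cons_zero, Fin.tail, Fin.cons_succ]
      omega
    · simp [Fin.tail, Fin.cons_succ]
  · rintro μ hμ
    funext i
    refine Fin.cases ?_ (fun i => ?_) i
    · simp only [Fin.cons_zero, Fin.tail, Fin.cons_succ]; omega
    · simp [Fin.tail, Fin.cons_succ]

lemma Icc_one_eq_Ioc (x : ℕ) : Finset.Icc 1 x = Finset.Ioc 0 x := by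
  ext a; simp [Nat.lt_iff_add_one_le]

lemma sum_choose_sub (m M t : ℕ) (hM : M ≤ m) (ht : 0 < t) :
    ∑ a ∈ Finset.Icc 1 m, (M - a).choose t = M.choose (t+1) := by
  have hsplit : ∑ a ∈ Finset.Ioc 0 M, (M - a).choose t
      + ∑ a ∈ Finset.Ioc M m, (M - a).choose t
      = ∑ a ∈ Finset.Ioc 0 m, (M - a).choose t :=
    Finset.sum_Ioc_consecutive _ (Nat.zero_le M) hM
  have h2 : ∑ a ∈ Finset.Ioc M m, (M - a).choose t = 0 := by
    apply Finset.sum_eq_zero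
    intro a ha
    simp only [Finset.mem_Ioc] at ha
    have : M - a = 0 := by omega
    rw [this]
    exact Nat.choose_eq_zero_of_lt ht
  have h1 : ∑ a ∈ Finset.Ioc 0 M, (M - a).choose t = M.choose (t+1) := by
    rw [← Icc_one_eq_Ioc, sum_Icc_rev M (fun b => b.choose t), hockey]
  rw [Icc_one_eq_Ioc]
  omega

lemma filter_cons_sum (s' k a : ℕ) (ν : Fin s' → ℕ) :
    ∑ i ∈ Finset.univ.filter (fun i : Fin (s'+1) => (i:ℕ) < k+1),
        (Fin.cons a ν : Fin (s'+1) → ℕ) i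
      = a + ∑ i ∈ Finset.univ.filter (fun i : Fin s' => (i:ℕ) < k), ν i := by
  rw [Finset.sum_filter, Fin.sum_univ_succ, Finset.sum_filter]
  simp only [Fin.cons_zero, Fin.cons_succ, Fin.val_zero, Fin.val_succ]
  rw [if_pos (Nat.succ_pos k)]
  congr 1
  apply Finset.sum_congr rfl
  intro i _
  congr 1
  simp only [eq_iff_iff]
  omega

lemma keyB : ∀ (k s m j : ℕ) (hk : k < s),
    (∑ ν ∈ posComp s m, if j < ν ⟨k, hk⟩ then
        m - j - ∑ i ∈ Finset.univ.filter (fun i : Fin s => (i:ℕ) < k), ν i else 0)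
      = (s - k) * (m - j).choose s := by
  intro k
  induction k with
  | zero =>
    intro s m j hk
    obtain ⟨s', rfl⟩ : ∃ s', s = s' + 1 := ⟨s - 1, by omega⟩
    have hfe : (Finset.univ.filter (fun i : Fin (s'+1) => (i:ℕ) < 0)) = ∅ := by
      apply Finset.filter_false_of_mem; intro i _; omega
    simp only [hfe, Finset.sum_empty, Nat.sub_zero]
    rw [← Finset.sum_filter, Finset.sum_const, smul_eq_mul]
    have h00 : (⟨0, hk⟩ : Fin (s'+1)) = 0 := rfl
    simp only [h00]
    rw [card_posComp_gt]
    rcases Nat.eq_zero_or_pos (m - j) with h0 | hpos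
    · rw [h0, posComp_zero_eq]; simp
    · rw [card_posComp (s') (m - j) hpos]
      have := Nat.add_one_mul_choose_eq (m - j - 1) s'
      have hmj : m - j - 1 + 1 = m - j := by omega
      rw [hmj] at this
      try simp only [Nat.sub_zero]
      ring_nf at this ⊢
      omega
  | succ k ih =>
    intro s m j hk
    obtain ⟨s', rfl⟩ : ∃ s', s = s' + 1 := ⟨s - 1, by omega⟩
    have hk' : k < s' := by omega
    rw [posComp_succ_sum]
    have hinner : ∀ a ∈ Finset.Icc 1 m,
        (∑ ν ∈ posComp s' (m - a), if j < (Fin.cons a ν : Fin (s'+1) → ℕ) ⟨k+1, hk⟩ then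
            m - j - ∑ i ∈ Finset.univ.filter (fun i : Fin (s'+1) => (i:ℕ) < k+1),
              (Fin.cons a ν : Fin (s'+1) → ℕ) i else 0)
          = (s' - k) * ((m - j) - a).choose s' := by
      intro a ha
      simp only [Finset.mem_Icc] at ha
      have hstep : ∀ ν ∈ posComp s' (m - a),
          (if j < (Fin.cons a ν : Fin (s'+1) → ℕ) ⟨k+1, hk⟩ then
            m - j - ∑ i ∈ Finset.univ.filter (fun i : Fin (s'+1) => (i:ℕ) < k+1),
              (Fin.cons a ν : Fin (s'+1) → ℕ) i else 0)
          = (if j < ν ⟨k, hk'⟩ then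
              (m - a) - j - ∑ i ∈ Finset.univ.filter (fun i : Fin s' => (i:ℕ) < k), ν i
            else 0) := by
        intro ν _
        have hc : (Fin.cons a ν : Fin (s'+1) → ℕ) ⟨k+1, hk⟩ = ν ⟨k, hk'⟩ := by
          have hsucc : (⟨k+1, hk⟩ : Fin (s'+1)) = Fin.succ ⟨k, hk'⟩ := rfl
          rw [hsucc, Fin.cons_succ]
        rw [hc, filter_cons_sum]
        split
        · omega
        · rfl
      rw [Finset.sum_congr rfl hstep, ih s' (m - a) j hk']
      congr 2
      omega
    rw [Finset.sum_congr rfl hinner, ← Finset.mul_sum]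
    rcases le_or_gt j m with hjm | hjm
    · rw [sum_choose_sub m (m - j) s' (by omega) (by omega)]
      congr 1
      omega
    · have hmj : m - j = 0 := by omega
      rw [hmj]
      have hz : ∀ i ∈ Finset.Icc 1 m, ((0:ℕ) - i).choose s' = 0 := by
        intro i hi
        simp only [Finset.mem_Icc] at hi
        rw [show (0:ℕ) - i = 0 by omega]
        exact Nat.choose_eq_zero_of_lt (by omega)
      rw [Finset.sum_congr rfl hz]
      simp [Nat.choose_eq_zero_of_lt (show 0 < s'+1 by omega)]


lemma grid_div {n k j : ℕ} (hj : j < n) : (k*n+j)/n = k := by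
  rw [mul_comm, Nat.mul_add_div (by omega)]
  simp [Nat.div_eq_of_lt hj]

lemma grid_mod {n k j : ℕ} (hj : j < n) : (k*n+j)%n = j := by
  rw [mul_comm, Nat.mul_add_mod]
  exact Nat.mod_eq_of_lt hj

lemma grid_lt {n k k' j j' : ℕ} (hj : j < n) (hj' : j' < n) :
    k'*n + j' < k*n + j ↔ (k' < k ∨ (k' = k ∧ j' < j)) := by
  rcases lt_trichotomy k' k with h|h|h
  · have hA : k'*n + n ≤ k*n := by
      calc k'*n + n = (k'+1)*n := by ring
      _ ≤ k*n := Nat.mul_le_mul_right n h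
    constructor
    · intro _; exact Or.inl h
    · intro _; omega
  · subst h; omega
  · have hA : k*n + n ≤ k'*n := by
      calc k*n + n = (k+1)*n := by ring
      _ ≤ k'*n := Nat.mul_le_mul_right n h
    constructor
    · intro hlt; omega
    · intro hor; omega

lemma finIdx_inj {s n : ℕ} {k k' : Fin s} {j j' : Fin n} :
    finIdx k' j' = finIdx k j ↔ (k' = k ∧ j' = j) := by
  constructor
  · intro hEq
    have hv : (k':ℕ)*n + (j':ℕ) = (k:ℕ)*n + (j:ℕ) := congrArg Fin.val hEq
    have h1 : ((k':ℕ)*n + (j':ℕ))/n = k' := grid_div j'.isLt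
    have h2 : ((k:ℕ)*n + (j:ℕ))/n = k := grid_div j.isLt
    have h3 : ((k':ℕ)*n + (j':ℕ))%n = j' := grid_mod j'.isLt
    have h4 : ((k:ℕ)*n + (j:ℕ))%n = j := grid_mod j.isLt
    rw [hv] at h1 h3
    exact ⟨Fin.ext (by omega), Fin.ext (by omega)⟩
  · rintro ⟨rfl, rfl⟩; rfl

lemma fin_eq_finIdx {s n : ℕ} (hn : 0 < n) (x : Fin (s * n)) :
    x = finIdx ⟨(x:ℕ)/n, (Nat.div_lt_iff_lt_mul hn).2 x.isLt⟩
          ⟨(x:ℕ)%n, Nat.mod_lt _ hn⟩ := by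
  apply Fin.ext
  simp only [finIdx]
  have := Nat.div_add_mod' (x:ℕ) n
  omega

lemma card_filter_grid {s n : ℕ} (P : Fin (s*n) → Prop) [DecidablePred P] :
    (Finset.univ.filter P).card
      = ∑ k : Fin s, (Finset.univ.filter (fun j : Fin n => P (finIdx k j))).card := by
  simp only [Finset.card_filter]
  rw [← Fintype.sum_prod_type']
  apply Fintype.sum_equiv finProdFinEquiv.symm
  intro x
  have hx : finIdx (finProdFinEquiv.symm x).1 (finProdFinEquiv.symm x).2 = x := by
    apply Fin.ext
    simp only [finIdx, finProdFinEquiv_symm_apply, Fin.coe_divNat, Fin.coe_modNat]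
    have := Nat.div_add_mod' (x:ℕ) n
    omega
  rw [hx]

lemma card_filter_fin_lt {n c : ℕ} :
    (Finset.univ.filter (fun j : Fin n => (j:ℕ) < c)).card = min c n := by
  rw [Finset.card_filter, Fin.sum_univ_eq_sum_range (fun i => if i < c then 1 else 0),
    ← Finset.card_filter]
  rw [show (Finset.range n).filter (fun i => i < c) = Finset.range (min c n) by
    ext a; simp; omega]
  simp

lemma mem_iotaSet_finIdx {s n : ℕ} (ν : Fin s → ℕ) (k : Fin s) (j : Fin n) :
    finIdx k j ∈ iotaSet s n ν ↔ (j:ℕ) < ν k := by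
  have hdiv : ((finIdx k j : ℕ))/n = k := grid_div j.isLt
  have hmod : ((finIdx k j : ℕ))%n = j := grid_mod j.isLt
  simp only [iotaSet, Finset.mem_filter, Finset.mem_univ, true_and, hdiv, hmod,
    dif_pos k.isLt]

lemma card_iotaSet {s n : ℕ} (ν : Fin s → ℕ) (hν : ∀ i, ν i ≤ n) :
    (iotaSet s n ν).card = ∑ i : Fin s, ν i := by
  rw [iotaSet, card_filter_grid]
  apply Finset.sum_congr rfl
  intro k _
  have hcong : (Finset.univ.filter fun j : Fin n =>
      ((finIdx k j : ℕ) % n < if h : ((finIdx k j : ℕ))/n < s then ν ⟨_, h⟩ else 0))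
      = Finset.univ.filter (fun j : Fin n => (j:ℕ) < ν k) := by
    apply Finset.filter_congr
    intro j _
    have h2 := mem_iotaSet_finIdx ν k j
    simp only [iotaSet, Finset.mem_filter, Finset.mem_univ, true_and] at h2
    simp only [h2]
  rw [hcong, card_filter_fin_lt, min_eq_left (hν k)]

lemma rank_iotaSet {s n : ℕ} (ν : Fin s → ℕ) (hν : ∀ i, ν i ≤ n) (k : Fin s) (j : Fin n)
    (hj : (j:ℕ) < ν k) :
    ((iotaSet s n ν).filter (fun y => y < finIdx k j)).card
      = (∑ i ∈ Finset.univ.filter (fun i : Fin s => (i:ℕ) < (k:ℕ)), ν i) + (j:ℕ) := by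
  have hset : (iotaSet s n ν).filter (fun y => y < finIdx k j)
      = Finset.univ.filter (fun x => x ∈ iotaSet s n ν ∧ x < finIdx k j) := by
    ext x; simp [Finset.mem_filter]
  rw [hset, card_filter_grid]
  have hC : ∀ (k' : Fin s) (j' : Fin n),
      (finIdx k' j' ∈ iotaSet s n ν ∧ finIdx k' j' < finIdx k j)
      ↔ ((j':ℕ) < ν k' ∧ ((k':ℕ) < (k:ℕ) ∨ ((k':ℕ) = (k:ℕ) ∧ (j':ℕ) < (j:ℕ)))) := by
    intro k' j'
    rw [mem_iotaSet_finIdx, Fin.lt_def]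
    have hg := grid_lt (n := n) (k := (k:ℕ)) (k' := (k':ℕ)) (j := (j:ℕ)) (j' := (j':ℕ))
      j.isLt j'.isLt
    constructor
    · rintro ⟨h1, h2⟩
      exact ⟨h1, hg.1 h2⟩
    · rintro ⟨h1, h2⟩
      exact ⟨h1, hg.2 h2⟩
  have hterm : ∀ k' : Fin s,
      (Finset.univ.filter (fun j' : Fin n =>
        finIdx k' j' ∈ iotaSet s n ν ∧ finIdx k' j' < finIdx k j)).card
      = (if (k':ℕ) < (k:ℕ) then ν k' else 0) + (if k' = k then (j:ℕ) else 0) := by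
    intro k'
    rcases lt_trichotomy (k':ℕ) (k:ℕ) with h|h|h
    · have hne : ¬ (k' = k) := fun he => by rw [he] at h; omega
      rw [if_pos h, if_neg hne]
      have hfil : (Finset.univ.filter (fun j' : Fin n =>
            finIdx k' j' ∈ iotaSet s n ν ∧ finIdx k' j' < finIdx k j))
          = Finset.univ.filter (fun j' : Fin n => (j':ℕ) < ν k') := by
        apply Finset.filter_congr
        intro j' _
        rw [hC k' j']
        constructor
        · rintro ⟨h1, _⟩; exact h1
        · intro h1; exact ⟨h1, Or.inl h⟩
      rw [hfil, card_filter_fin_lt, min_eq_left (hν k')]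
      omega
    · have heq : k' = k := Fin.ext h
      rw [if_neg (by omega), if_pos heq]
      have hfil : (Finset.univ.filter (fun j' : Fin n =>
            finIdx k' j' ∈ iotaSet s n ν ∧ finIdx k' j' < finIdx k j))
          = Finset.univ.filter (fun j' : Fin n => (j':ℕ) < (j:ℕ)) := by
        apply Finset.filter_congr
        intro j' _
        rw [hC k' j']
        constructor
        · rintro ⟨h1, h2⟩; omega
        · intro h1; exact ⟨by rw [heq]; omega, Or.inr ⟨h, h1⟩⟩
      rw [hfil, card_filter_fin_lt, min_eq_left (le_of_lt j.isLt)]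
      omega
    · have hne : ¬ (k' = k) := fun he => by rw [he] at h; omega
      rw [if_neg (by omega), if_neg hne]
      have hfil : (Finset.univ.filter (fun j' : Fin n =>
            finIdx k' j' ∈ iotaSet s n ν ∧ finIdx k' j' < finIdx k j)) = ∅ := by
        apply Finset.filter_false_of_mem
        intro j' _
        rw [hC k' j']
        rintro ⟨h1, h2⟩
        omega
      rw [hfil]
      simp
  rw [Finset.sum_congr rfl (fun k' _ => hterm k'), Finset.sum_add_distrib]
  congr 1
  · rw [← Finset.sum_filter]
  · rw [Finset.sum_ite_eq' Finset.univ k (fun _ => (j:ℕ))]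
    simp

lemma orderEmb_rank {N c : ℕ} (J : Finset (Fin N)) (h : J.card = c) (p : Fin c) :
    ((J.filter (fun y => y < J.orderEmbOfFin h p)).card : ℕ) = (p : ℕ) := by
  have hcard : (Finset.univ.filter (fun q : Fin c => q < p)).card
      = (J.filter (fun y => y < J.orderEmbOfFin h p)).card := by
    apply Finset.card_bij (fun q _ => J.orderEmbOfFin h q)
    · intro q hq
      simp only [Finset.mem_filter, Finset.mem_univ, true_and] at hq ⊢
      exact ⟨Finset.orderEmbOfFin_mem J h q, (J.orderEmbOfFin h).strictMono hq⟩
    · intro a _ b _ hab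
      exact (J.orderEmbOfFin h).injective hab
    · intro y hy
      simp only [Finset.mem_filter] at hy
      obtain ⟨hyJ, hylt⟩ := hy
      have : y ∈ Set.range (J.orderEmbOfFin h) := by
        rw [Finset.range_orderEmbOfFin]; exact hyJ
      obtain ⟨q, hq⟩ := this
      refine ⟨q, ?_, hq⟩
      simp only [Finset.mem_filter, Finset.mem_univ, true_and]
      have := (J.orderEmbOfFin h).strictMono.lt_iff_lt (a := q) (b := p)
      rw [hq] at this
      exact this.1 hylt
  rw [← hcard]
  have := card_filter_fin_lt (n := c) (c := (p:ℕ))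
  rw [show (Finset.univ.filter (fun q : Fin c => q < p))
      = (Finset.univ.filter (fun q : Fin c => (q:ℕ) < (p:ℕ))) from by
    apply Finset.filter_congr; intro q _; exact Fin.lt_def]
  rw [this, min_eq_left (le_of_lt p.isLt)]

lemma univ_orderEmb_val (N : ℕ) (p : Fin ((Finset.univ : Finset (Fin N)).card)) :
    (((Finset.univ : Finset (Fin N)).orderEmbOfFin rfl p : Fin N) : ℕ) = (p : ℕ) := by
  have hc : (Finset.univ : Finset (Fin N)).card = N := by simp
  have h2 := Finset.orderEmbOfFin_unique (s := (Finset.univ : Finset (Fin N))) rfl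
    (f := fun i => (⟨(i:ℕ), by omega⟩ : Fin N)) (fun x => Finset.mem_univ _)
    (fun a b hab => hab)
  rw [← h2]

lemma Dstar_apply {s n : ℕ} (k : Fin s) (j : Fin n) :
    Dstar s n (finIdx k j) = (s - (k:ℕ)) * (s + n - 1 - (j:ℕ)).choose s := by
  rw [Dstar, Finset.sum_apply']
  rw [Finset.sum_eq_single k]
  · rw [Finset.sum_apply', Finset.sum_eq_single j]
    · rw [Finsupp.single_apply, if_pos rfl]
    · intro j' _ hj'
      rw [Finsupp.single_apply, if_neg]
      intro hEq
      exact hj' (finIdx_inj.1 hEq).2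
    · intro habs; exact absurd (Finset.mem_univ j) habs
  · intro k' _ hk'
    rw [Finset.sum_apply']
    apply Finset.sum_eq_zero
    intro j' _
    rw [Finsupp.single_apply, if_neg]
    intro hEq
    exact hk' (finIdx_inj.1 hEq).1
  · intro habs; exact absurd (Finset.mem_univ k) habs

lemma Dvec_apply {s n : ℕ} (J : Finset (Fin (s * n)))
    (hJ : J.card = (Finset.univ : Finset (Fin (s + n - 1))).card) (x : Fin (s * n)) :
    Dvec s n Finset.univ J x
      = if x ∈ J then (s + n - 1) - (J.filter (fun y => y < x)).card else 0 := by
  rw [Dvec, dif_pos hJ, Finset.sum_apply']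
  by_cases hx : x ∈ J
  · rw [if_pos hx]
    have hrange : x ∈ Set.range (J.orderEmbOfFin hJ) := by
      rw [Finset.range_orderEmbOfFin]; exact hx
    obtain ⟨q, hq⟩ := hrange
    rw [Finset.sum_eq_single q]
    · rw [Finsupp.single_apply, if_pos hq, univ_orderEmb_val]
      congr 1
      rw [← hq, orderEmb_rank]
    · intro p _ hp
      rw [Finsupp.single_apply, if_neg]
      intro hEq
      exact hp ((J.orderEmbOfFin hJ).injective (hEq.trans hq.symm))
    · intro habs; exact absurd (Finset.mem_univ q) habs
  · rw [if_neg hx]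
    apply Finset.sum_eq_zero
    intro p _
    rw [Finsupp.single_apply, if_neg]
    intro hEq
    exact hx (hEq ▸ Finset.orderEmbOfFin_mem J hJ p)

/-- `∏_{ν ∈ Z^0_{s,s+n−1}} x_{ι(ν)}^{s+n−[s+n−1]}
= ∏_{k=1}^s ∏_{j=1}^n x_{(k−1)n+j}^{(s+1−k)·C(s+n−j,s)}`. -/
theorem monomial_identity (s n : ℕ) (hs : 0 < s) (hn : 0 < n) :
    (∏ ν ∈ (Finset.Nat.antidiagonalTuple s (s + n - 1)).filter
        (fun ν => ∀ i, 0 < ν i),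
      (MvPolynomial.monomial (Dvec s n Finset.univ (iotaSet s n ν)) (1 : ℚ)))
      = MvPolynomial.monomial (Dstar s n) (1 : ℚ) := by
  rw [← MvPolynomial.monomial_sum_one]
  suffices h : (∑ ν ∈ (Finset.Nat.antidiagonalTuple s (s + n - 1)).filter
      (fun ν => ∀ i, 0 < ν i), Dvec s n Finset.univ (iotaSet s n ν)) = Dstar s n by
    rw [h]
  ext x
  rw [Finset.sum_apply']
  have hdiv : (x:ℕ)/n < s := (Nat.div_lt_iff_lt_mul hn).2 x.isLt
  set k : Fin s := ⟨(x:ℕ)/n, hdiv⟩ with hkdef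
  set j : Fin n := ⟨(x:ℕ)%n, Nat.mod_lt _ hn⟩ with hjdef
  have hx : x = finIdx k j := fin_eq_finIdx hn x
  rw [hx, Dstar_apply]
  have hterm : ∀ ν ∈ (Finset.Nat.antidiagonalTuple s (s + n - 1)).filter
      (fun ν => ∀ i, 0 < ν i),
      Dvec s n Finset.univ (iotaSet s n ν) (finIdx k j)
        = (if (j:ℕ) < ν ⟨(k:ℕ), k.isLt⟩ then
            (s + n - 1) - (j:ℕ)
              - ∑ i ∈ Finset.univ.filter (fun i : Fin s => (i:ℕ) < (k:ℕ)), ν i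
          else 0) := by
    intro ν hν
    rw [Finset.mem_filter, Finset.Nat.mem_antidiagonalTuple] at hν
    obtain ⟨hsum, hpos⟩ := hν
    have hle : ∀ i, ν i ≤ n := by
      intro i
      have h1 : ∑ l ∈ Finset.univ.erase i, ν l + ν i = ∑ l, ν l :=
        Finset.sum_erase_add Finset.univ ν (Finset.mem_univ i)
      have h2 : (Finset.univ.erase i).card • 1 ≤ ∑ l ∈ Finset.univ.erase i, ν l :=
        Finset.card_nsmul_le_sum _ _ _ (fun l _ => hpos l)
      have h3 : (Finset.univ.erase i).card = s - 1 := by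
        rw [Finset.card_erase_of_mem (Finset.mem_univ i), Finset.card_univ, Fintype.card_fin]
      rw [h3] at h2
      simp only [smul_eq_mul, mul_one] at h2
      omega
    have hcard : (iotaSet s n ν).card = (Finset.univ : Finset (Fin (s + n - 1))).card := by
      rw [card_iotaSet ν hle, hsum, Finset.card_univ, Fintype.card_fin]
    rw [Dvec_apply _ hcard]
    have hke : (⟨(k:ℕ), k.isLt⟩ : Fin s) = k := rfl
    rw [hke]
    by_cases hc : (j:ℕ) < ν k
    · rw [if_pos ((mem_iotaSet_finIdx ν k j).2 hc), if_pos hc,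
        rank_iotaSet ν hle k j hc]
      omega
    · rw [if_neg (fun hmem => hc ((mem_iotaSet_finIdx ν k j).1 hmem)), if_neg hc]
  rw [Finset.sum_congr rfl hterm]
  have hkey := keyB (k:ℕ) s (s + n - 1) (j:ℕ) k.isLt
  rw [show posComp s (s + n - 1) = (Finset.Nat.antidiagonalTuple s (s + n - 1)).filter
      (fun ν => ∀ i, 0 < ν i) from rfl] at hkey
  rw [hkey]
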